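/- Let n be a measure on ℝ with ∫ (e^z ∧ |z|²) n(dz) < ∞ and let χ denote its exponential double tail (χ(z) = ∫_{−∞}^z e^x n((−∞,x]) dx for z<0 and χ(z) = ∫_z^∞ e^x n([x,∞)) dx for z>0). Then for all y, K > 0 with ln(K/y) ≠ 0, ∫_ℝ [(y e^z − K)⁺ − e^z (y−K)⁺ − K(e^z − 1)1_{y>K}] n(dz) = y · χ(ln(K/y)). -/

import Mathlib

open MeasureTheory Real Set
open scoped ENNReal

lemma aux_exp_lintegral (a b : ℝ) (h : a ≤ b) :
    ∫⁻ x in Icc a b, ENNReal.ofReal (Real.exp x) = ENNReal.ofReal (Real.exp b - Real.exp a) := by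
  rw [← ofReal_integral_eq_lintegral_ofReal (continuous_exp.integrableOn_Icc)
    (Filter.Eventually.of_forall fun x => (Real.exp_pos x).le)]
  congr 1
  rw [integral_Icc_eq_integral_Ioc, ← intervalIntegral.integral_of_le h, integral_exp]

lemma aux_finite (n : Measure ℝ) (hn : Integrable (fun z => min (Real.exp z) (|z| ^ 2)) n)
    {S : Set ℝ} {c : ℝ} (hc : 0 < c) (h : ∀ z ∈ S, c ≤ min (Real.exp z) (|z| ^ 2)) :
    n S < ⊤ := by
  have h1 : ENNReal.ofReal c * n S ≤ ∫⁻ z, ENNReal.ofReal (min (Real.exp z) (|z| ^ 2)) ∂n := by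
    calc ENNReal.ofReal c * n S = ∫⁻ _ in S, ENNReal.ofReal c ∂n := by
          rw [setLIntegral_const, mul_comm]
      _ ≤ ∫⁻ z in S, ENNReal.ofReal (min (Real.exp z) (|z| ^ 2)) ∂n :=
          setLIntegral_mono (by fun_prop) fun z hz => ENNReal.ofReal_le_ofReal (h z hz)
      _ ≤ _ := setLIntegral_le_lintegral _ _
  have h3 := lt_of_le_of_lt h1 hn.lintegral_lt_top
  rw [ENNReal.mul_lt_top_iff] at h3
  rcases h3 with ⟨_, h3⟩ | h3 | h3
  · exact h3
  · simp [ENNReal.ofReal_eq_zero] at h3; linarith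
  · simp [h3]

lemma tonelli_pos (n : Measure ℝ) [SigmaFinite n] (L : ℝ) :
    ∫⁻ z, ENNReal.ofReal (max (Real.exp z - Real.exp L) 0) ∂n
      = ∫⁻ x in Ici L, ENNReal.ofReal (Real.exp x) * n (Ici x) := by
  set F : ℝ → ℝ → ℝ≥0∞ := fun x z =>
    (Ici L).indicator (fun t => ENNReal.ofReal (Real.exp t)) x
      * {q : ℝ × ℝ | q.1 ≤ q.2}.indicator 1 (x, z) with hF
  have hFm : Measurable (Function.uncurry F) := by
    apply Measurable.mul
    · exact (Measurable.indicator (by fun_prop) measurableSet_Ici).comp measurable_fst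
    · exact Measurable.indicator measurable_const (measurableSet_le measurable_fst measurable_snd)
  have stepA : ∀ z, ∫⁻ x, F x z = ENNReal.ofReal (max (Real.exp z - Real.exp L) 0) := by
    intro z
    have : ∀ x, F x z = (Icc L z).indicator (fun t => ENNReal.ofReal (Real.exp t)) x := by
      intro x
      by_cases h1 : L ≤ x <;> by_cases h2 : x ≤ z <;>
        simp [hF, indicator, h1, h2, mem_Icc, mem_Ici]
    rw [lintegral_congr this, lintegral_indicator measurableSet_Icc]
    rcases le_or_gt L z with h | h
    · rw [aux_exp_lintegral L z h, max_eq_left (sub_nonneg.mpr (Real.exp_le_exp.mpr h))]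
    · rw [Icc_eq_empty (not_le.mpr h), Measure.restrict_empty, lintegral_zero_measure,
        max_eq_right (by nlinarith [Real.exp_lt_exp.mpr h]), ENNReal.ofReal_zero]
  have stepB : ∀ x, ∫⁻ z, F x z ∂n
      = (Ici L).indicator (fun t => ENNReal.ofReal (Real.exp t) * n (Ici t)) x := by
    intro x
    have : ∀ z, F x z = (Ici L).indicator (fun t => ENNReal.ofReal (Real.exp t)) x
        * (Ici x).indicator 1 z := by
      intro z
      by_cases h2 : x ≤ z <;> simp [hF, indicator, h2, mem_Ici]
    rw [lintegral_congr this, lintegral_const_mul _ (by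
      exact Measurable.indicator measurable_const measurableSet_Ici),
      lintegral_indicator_one measurableSet_Ici]
    by_cases h1 : L ≤ x <;> simp [indicator, h1, mem_Ici]
  calc ∫⁻ z, ENNReal.ofReal (max (Real.exp z - Real.exp L) 0) ∂n
      = ∫⁻ z, ∫⁻ x, F x z ∂volume ∂n := by rw [lintegral_congr stepA]
    _ = ∫⁻ x, ∫⁻ z, F x z ∂n ∂volume := (lintegral_lintegral_swap hFm.aemeasurable).symm
    _ = ∫⁻ x, (Ici L).indicator (fun t => ENNReal.ofReal (Real.exp t) * n (Ici t)) x ∂volume := by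
        rw [lintegral_congr stepB]
    _ = _ := lintegral_indicator measurableSet_Ici _

lemma tonelli_neg (n : Measure ℝ) [SigmaFinite n] (L : ℝ) :
    ∫⁻ z, ENNReal.ofReal (max (Real.exp L - Real.exp z) 0) ∂n
      = ∫⁻ x in Iic L, ENNReal.ofReal (Real.exp x) * n (Iic x) := by
  set F : ℝ → ℝ → ℝ≥0∞ := fun x z =>
    (Iic L).indicator (fun t => ENNReal.ofReal (Real.exp t)) x
      * {q : ℝ × ℝ | q.2 ≤ q.1}.indicator 1 (x, z) with hF
  have hFm : Measurable (Function.uncurry F) := by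
    apply Measurable.mul
    · exact (Measurable.indicator (by fun_prop) measurableSet_Iic).comp measurable_fst
    · exact Measurable.indicator measurable_const (measurableSet_le measurable_snd measurable_fst)
  have stepA : ∀ z, ∫⁻ x, F x z = ENNReal.ofReal (max (Real.exp L - Real.exp z) 0) := by
    intro z
    have : ∀ x, F x z = (Icc z L).indicator (fun t => ENNReal.ofReal (Real.exp t)) x := by
      intro x
      by_cases h1 : x ≤ L <;> by_cases h2 : z ≤ x <;>
        simp [hF, indicator, h1, h2, mem_Icc, mem_Iic]
    rw [lintegral_congr this, lintegral_indicator measurableSet_Icc]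
    rcases le_or_gt z L with h | h
    · rw [aux_exp_lintegral z L h, max_eq_left (sub_nonneg.mpr (Real.exp_le_exp.mpr h))]
    · rw [Icc_eq_empty (not_le.mpr h), Measure.restrict_empty, lintegral_zero_measure,
        max_eq_right (by nlinarith [Real.exp_lt_exp.mpr h]), ENNReal.ofReal_zero]
  have stepB : ∀ x, ∫⁻ z, F x z ∂n
      = (Iic L).indicator (fun t => ENNReal.ofReal (Real.exp t) * n (Iic t)) x := by
    intro x
    have : ∀ z, F x z = (Iic L).indicator (fun t => ENNReal.ofReal (Real.exp t)) x
        * (Iic x).indicator 1 z := by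
      intro z
      by_cases h2 : z ≤ x <;> simp [hF, indicator, h2, mem_Iic]
    rw [lintegral_congr this, lintegral_const_mul _ (by
      exact Measurable.indicator measurable_const measurableSet_Iic),
      lintegral_indicator_one measurableSet_Iic]
    by_cases h1 : x ≤ L <;> simp [indicator, h1, mem_Iic]
  calc ∫⁻ z, ENNReal.ofReal (max (Real.exp L - Real.exp z) 0) ∂n
      = ∫⁻ z, ∫⁻ x, F x z ∂volume ∂n := by rw [lintegral_congr stepA]
    _ = ∫⁻ x, ∫⁻ z, F x z ∂n ∂volume := (lintegral_lintegral_swap hFm.aemeasurable).symm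
    _ = ∫⁻ x, (Iic L).indicator (fun t => ENNReal.ofReal (Real.exp t) * n (Iic t)) x ∂volume := by
        rw [lintegral_congr stepB]
    _ = _ := lintegral_indicator measurableSet_Iic _

theorem stmt_4 (n : Measure ℝ) [SigmaFinite n]
    (hn : Integrable (fun z => min (Real.exp z) (|z| ^ 2)) n)
    (chi : ℝ → ℝ)
    (hchi_neg : ∀ z < (0 : ℝ), chi z = ∫ x in Iic z, Real.exp x * (n (Iic x)).toReal)
    (hchi_pos : ∀ z > (0 : ℝ), chi z = ∫ x in Ici z, Real.exp x * (n (Ici x)).toReal)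
    (y K : ℝ) (hy : 0 < y) (hK : 0 < K) (hne : Real.log (K / y) ≠ 0) :
    ∫ z, (max (y * Real.exp z - K) 0 - Real.exp z * max (y - K) 0
        - K * (Real.exp z - 1) * (if y > K then (1 : ℝ) else 0)) ∂n
      = y * chi (Real.log (K / y)) := by
  set L := Real.log (K / y) with hLdef
  have hexpL : Real.exp L = K / y := Real.exp_log (div_pos hK hy)
  have hKyL : y * Real.exp L = K := by rw [hexpL]; field_simp
  rcases lt_or_gt_of_ne hne with hL | hL
  · -- L < 0, y > K
    have hyK : K < y := by
      have h1 : Real.exp L < 1 := by rw [← Real.exp_zero]; exact Real.exp_lt_exp.mpr hL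
      rw [hexpL] at h1
      exact (div_lt_one hy).mp h1
    have hptw : ∀ z, (max (y * Real.exp z - K) 0 - Real.exp z * max (y - K) 0
        - K * (Real.exp z - 1) * (if y > K then (1 : ℝ) else 0))
        = y * max (Real.exp L - Real.exp z) 0 := by
      intro z
      rw [if_pos hyK, max_eq_left (sub_nonneg.mpr hyK.le)]
      rcases le_total z L with h | h
      · have h1 : y * Real.exp z ≤ K := by
          rw [← hKyL]; exact mul_le_mul_of_nonneg_left (Real.exp_le_exp.mpr h) hy.le
        rw [max_eq_right (sub_nonpos.mpr h1),
          max_eq_left (sub_nonneg.mpr (Real.exp_le_exp.mpr h)), ← hKyL]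
        ring
      · have h1 : K ≤ y * Real.exp z := by
          rw [← hKyL]; exact mul_le_mul_of_nonneg_left (Real.exp_le_exp.mpr h) hy.le
        rw [max_eq_left (sub_nonneg.mpr h1),
          max_eq_right (sub_nonpos.mpr (Real.exp_le_exp.mpr h)), ← hKyL]
        ring
    simp only [hptw]
    rw [integral_const_mul]
    congr 1
    have hLHS : ∫ z, max (Real.exp L - Real.exp z) 0 ∂n
        = (∫⁻ z, ENNReal.ofReal (max (Real.exp L - Real.exp z) 0) ∂n).toReal := by
      refine integral_eq_lintegral_of_nonneg_ae
        (Filter.Eventually.of_forall fun z => le_max_right _ _) ?_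
      exact ((continuous_const.sub continuous_exp).max continuous_const).aestronglyMeasurable
    rw [hchi_neg L hL, hLHS, tonelli_neg n L]
    have hmt : Measurable fun x => n (Iic x) :=
      Monotone.measurable fun a b hab => measure_mono (Iic_subset_Iic.mpr hab)
    rcases eq_or_ne (n (Iic L)) ⊤ with htop | hfin
    · -- degenerate case: everything is zero
      have claim : ∀ x ≤ L, n (Iic x) = ⊤ := by
        intro x hx
        by_contra hne'
        have hioc : n (Ioc x L) < ⊤ := by
          refine aux_finite n hn (c := min (Real.exp x) (L ^ 2))
            (lt_min (Real.exp_pos x) (by positivity)) ?_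
          intro z hz
          refine le_min (le_trans (min_le_left _ _) (Real.exp_le_exp.mpr hz.1.le))
            (le_trans (min_le_right _ _) ?_)
          have := hz.2
          nlinarith [abs_nonneg z, le_abs_self (-z), neg_le_abs z]
        have : n (Iic L) < ⊤ := by
          rw [← Iic_union_Ioc_eq_Iic hx]
          exact lt_of_le_of_lt (measure_union_le _ _)
            (ENNReal.add_lt_top.mpr ⟨lt_top_iff_ne_top.mpr hne', hioc⟩)
        exact absurd htop this.ne
      have hrhs : ∫ x in Iic L, Real.exp x * (n (Iic x)).toReal = 0 := by
        rw [setIntegral_congr_fun measurableSet_Iic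
          (fun x hx => by rw [claim x hx, ENNReal.toReal_top, mul_zero] : ∀ x ∈ Iic L,
            Real.exp x * (n (Iic x)).toReal = (fun _ => (0:ℝ)) x)]
        simp
      have hlhs : ∫⁻ x in Iic L, ENNReal.ofReal (Real.exp x) * n (Iic x) = ⊤ := by
        rw [eq_top_iff]
        calc (⊤ : ℝ≥0∞) = ∫⁻ _ in Iic L, ⊤ ∂volume := by
              rw [setLIntegral_const]
              rw [Real.volume_Iic]
              simp
          _ ≤ _ := by
              refine setLIntegral_mono ((ENNReal.measurable_ofReal.comp measurable_exp).mul hmt)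
                fun x hx => ?_
              rw [claim x hx, ENNReal.mul_top
                (by simp [ENNReal.ofReal_eq_zero, not_le, Real.exp_pos x])]
      rw [hlhs, hrhs, ENNReal.toReal_top]
    · -- regular case
      have hfin' : ∀ x ∈ Iic L, n (Iic x) ≠ ⊤ := fun x hx =>
        ((measure_mono (Iic_subset_Iic.mpr hx)).trans_lt (lt_top_iff_ne_top.mpr hfin)).ne
      rw [integral_eq_lintegral_of_nonneg_ae
        (Filter.Eventually.of_forall fun x => mul_nonneg (Real.exp_pos x).le ENNReal.toReal_nonneg)
        (Measurable.aestronglyMeasurable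
          (Real.measurable_exp.mul (ENNReal.measurable_toReal.comp hmt)))]
      congr 1
      refine (setLIntegral_congr_fun measurableSet_Iic
        (fun x hx => ?_)).symm
      rw [ENNReal.ofReal_mul (Real.exp_pos x).le, ENNReal.ofReal_toReal (hfin' x hx)]
  · -- L > 0, y < K
    have hyK : y < K := by
      have h1 : (1 : ℝ) < Real.exp L := by rw [← Real.exp_zero]; exact Real.exp_lt_exp.mpr hL
      rw [hexpL] at h1
      exact (one_lt_div hy).mp h1
    have hptw : ∀ z, (max (y * Real.exp z - K) 0 - Real.exp z * max (y - K) 0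
        - K * (Real.exp z - 1) * (if y > K then (1 : ℝ) else 0))
        = y * max (Real.exp z - Real.exp L) 0 := by
      intro z
      rw [if_neg (not_lt.mpr hyK.le), max_eq_right (sub_nonpos.mpr hyK.le)]
      rcases le_total z L with h | h
      · have h1 : y * Real.exp z ≤ K := by
          rw [← hKyL]; exact mul_le_mul_of_nonneg_left (Real.exp_le_exp.mpr h) hy.le
        rw [max_eq_right (sub_nonpos.mpr h1),
          max_eq_right (sub_nonpos.mpr (Real.exp_le_exp.mpr h))]
        ring
      · have h1 : K ≤ y * Real.exp z := by
          rw [← hKyL]; exact mul_le_mul_of_nonneg_left (Real.exp_le_exp.mpr h) hy.le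
        rw [max_eq_left (sub_nonneg.mpr h1),
          max_eq_left (sub_nonneg.mpr (Real.exp_le_exp.mpr h)), ← hKyL]
        ring
    simp only [hptw]
    rw [integral_const_mul]
    congr 1
    have hLHS : ∫ z, max (Real.exp z - Real.exp L) 0 ∂n
        = (∫⁻ z, ENNReal.ofReal (max (Real.exp z - Real.exp L) 0) ∂n).toReal := by
      refine integral_eq_lintegral_of_nonneg_ae
        (Filter.Eventually.of_forall fun z => le_max_right _ _) ?_
      exact ((continuous_exp.sub continuous_const).max continuous_const).aestronglyMeasurable
    rw [hchi_pos L hL, hLHS, tonelli_pos n L]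
    have hmt : Measurable fun x => n (Ici x) :=
      Antitone.measurable fun a b hab => measure_mono (Ici_subset_Ici.mpr hab)
    have hfin' : ∀ x ∈ Ici L, n (Ici x) ≠ ⊤ := by
      intro x hx
      have hx0 : 0 < x := lt_of_lt_of_le hL hx
      refine (aux_finite n hn (c := min (Real.exp x) (x ^ 2))
        (lt_min (Real.exp_pos x) (by positivity)) ?_).ne
      intro z hz
      refine le_min (le_trans (min_le_left _ _) (Real.exp_le_exp.mpr hz))
        (le_trans (min_le_right _ _) ?_)
      have hzx : x ≤ z := hz
      nlinarith [le_abs_self z, abs_nonneg z]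
    rw [integral_eq_lintegral_of_nonneg_ae
      (Filter.Eventually.of_forall fun x => mul_nonneg (Real.exp_pos x).le ENNReal.toReal_nonneg)
      (Measurable.aestronglyMeasurable
        (Real.measurable_exp.mul (ENNReal.measurable_toReal.comp hmt)))]
    congr 1
    refine (setLIntegral_congr_fun measurableSet_Ici
      (fun x hx => ?_)).symm
    rw [ENNReal.ofReal_mul (Real.exp_pos x).le, ENNReal.ofReal_toReal (hfin' x hx)]
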